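/- Let S be a symmetric endomorphism of a real inner product space of dimension n-1 (with n-1 ≥ 1) such that Tr(S) = 0 and S satisfies the recursion relations forcing Tr(S^{2k+1}) = 0 and Tr(S^{2k}) = n-1 for all natural k. Then S² = 1, and since S is traceless with eigenvalues ±1 of equal multiplicity, n-1 must be even. -/

import Mathlib

open scoped RealInnerProductSpace

/-- A symmetric endomorphism of an `(n-1)`-dimensional real inner product space whose odd
power traces vanish and whose even power traces all equal `n-1` squares to the identity,
and `n-1` is even. -/
theorem stmt0 {V : Type*} [NormedAddCommGroup V] [InnerProductSpace ℝ V]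
    [FiniteDimensional ℝ V] (n : ℕ) (hn : 1 ≤ n - 1)
    (hdim : Module.finrank ℝ V = n - 1)
    (S : V →ₗ[ℝ] V) (hS : S.IsSymmetric)
    (hodd : ∀ k : ℕ, LinearMap.trace ℝ V (S ^ (2 * k + 1)) = 0)
    (heven : ∀ k : ℕ, LinearMap.trace ℝ V (S ^ (2 * k)) = (n - 1 : ℕ)) :
    S * S = 1 ∧ Even (n - 1) := by
  set m := n - 1 with hm
  set b := hS.eigenvectorBasis hdim with hb
  set μ := hS.eigenvalues hdim with hμ
  have hpow : ∀ (p : ℕ) (i : Fin m), (S ^ p) (b i) = (μ i) ^ p • b i := by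
    intro p i
    induction p with
    | zero => simp
    | succ p ih =>
      rw [pow_succ', Module.End.mul_apply, ih, map_smul,
        hS.apply_eigenvectorBasis hdim i, smul_smul, pow_succ]
      rw [← hμ, ← hb]; norm_num [mul_comm]
  have htr : ∀ p : ℕ, LinearMap.trace ℝ V (S ^ p) = ∑ i, (μ i) ^ p := by
    intro p
    rw [LinearMap.trace_eq_matrix_trace ℝ b.toBasis, Matrix.trace]
    congr 1
    ext i
    rw [Matrix.diag_apply, LinearMap.toMatrix_apply]
    simp [hpow p i]
  have h1 : ∑ i, μ i = 0 := by
    have := hodd 0; rw [htr] at this; simpa using this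
  have h2 : ∑ i, (μ i) ^ 2 = (m : ℝ) := by
    have := heven 1; rw [htr] at this; simpa using this
  have h4 : ∑ i, (μ i) ^ 4 = (m : ℝ) := by
    have := heven 2; rw [htr] at this; simpa using this
  have hcard : (Finset.univ : Finset (Fin m)).card = m := by simp
  have hsum1 : ∑ _i : Fin m, (1 : ℝ) = (m : ℝ) := by simp
  have hzero : ∑ i, ((μ i) ^ 2 - 1) ^ 2 = 0 := by
    calc ∑ i, ((μ i) ^ 2 - 1) ^ 2
        = ∑ i, ((μ i) ^ 4 - 2 * (μ i) ^ 2 + 1) :=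
          Finset.sum_congr rfl (fun i _ => by ring)
      _ = ∑ i, (μ i) ^ 4 - 2 * ∑ i, (μ i) ^ 2 + ∑ _i : Fin m, (1 : ℝ) := by
          rw [Finset.sum_add_distrib, Finset.sum_sub_distrib, Finset.mul_sum]
      _ = 0 := by rw [h2, h4, hsum1]; ring
  have hone : ∀ i : Fin m, (μ i) ^ 2 = 1 := by
    intro i
    have := (Finset.sum_eq_zero_iff_of_nonneg (fun i _ => sq_nonneg _)).mp hzero
      i (Finset.mem_univ i)
    nlinarith [this]
  have hSS : S * S = 1 := by
    apply b.toBasis.ext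
    intro i
    have := hpow 2 (i := i)
    simp only [OrthonormalBasis.coe_toBasis]
    rw [show S * S = S ^ 2 by rw [pow_two], hpow 2 i, hone i, one_smul,
      Module.End.one_apply]
  refine ⟨hSS, ?_⟩
  -- eigenvalues are ±1
  have hpm : ∀ i : Fin m, μ i = 1 ∨ μ i = -1 := by
    intro i
    have hfac : (μ i - 1) * (μ i + 1) = 0 := by nlinarith [hone i]
    rcases mul_eq_zero.mp hfac with h | h
    · left; linarith
    · right; linarith
  set P := Finset.univ.filter (fun i : Fin m => μ i = 1) with hP
  have hsplit : (P.card : ℝ) - ((Finset.univ.filter (fun i : Fin m => ¬ μ i = 1)).card : ℝ) = 0 := by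
    have := Finset.sum_filter_add_sum_filter_not Finset.univ (fun i : Fin m => μ i = 1) μ
    rw [h1] at this
    have hA : ∑ i ∈ P, μ i = (P.card : ℝ) := by
      rw [Finset.sum_congr rfl (fun i hi => (Finset.mem_filter.mp hi).2)]
      simp [hP]
    have hB : ∑ i ∈ Finset.univ.filter (fun i : Fin m => ¬ μ i = 1), μ i
        = -((Finset.univ.filter (fun i : Fin m => ¬ μ i = 1)).card : ℝ) := by
      rw [Finset.sum_congr rfl (fun i hi => show μ i = -1 from
        (hpm i).resolve_left (Finset.mem_filter.mp hi).2)]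
      simp
    rw [hA, hB] at this
    linarith
  have hcardsum : P.card + (Finset.univ.filter (fun i : Fin m => ¬ μ i = 1)).card = m := by
    rw [Finset.card_filter_add_card_filter_not]
    simp
  have : m = 2 * P.card := by
    have : (P.card : ℝ) = ((Finset.univ.filter (fun i : Fin m => ¬ μ i = 1)).card : ℝ) := by
      linarith
    have hq : P.card = (Finset.univ.filter (fun i : Fin m => ¬ μ i = 1)).card :=
      Nat.cast_injective this
    omega
  exact ⟨P.card, by omega⟩
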